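/- arXiv:1901.08572 — 2 statements merged into one kernel-verified Lean document; each statement's English description precedes it below -/
import Mathlib

section
/- Let γ = L·σ_min(X)²/(4 d_out), let B > 0, and let t ≥ 0. Suppose the gradient descent iterates satisfy, for every 0 ≤ s ≤ t: (i) ℓ(s) ≤ (1 − ηγ)^s · B, and (ii) σ_max(W_{L:i+1}(s)) ≤ (5/4)·m^{(L−i)/2} and σ_max(W_{i−1:1}(s)·X) ≤ (5/4)·m^{(i−1)/2}·σ_max(X) for every i ∈ {1,…,L}. Assume also 0 < ηγ ≤ 1. Then for every i ∈ {1,…,L}, ‖W_i(t+1) − W_i(0)‖_F ≤ 24·√(B·d_out)·σ_max(X) / (L·σ_min(X)²). -/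
open MeasureTheory ProbabilityTheory Matrix
open scoped BigOperators ENNReal

noncomputable section

/-- `W_j * W_{j-1} * ⋯ * W_i` for a family of square matrices (identity if `j < i`). -/
def midProd {m : ℕ} (W : ℕ → Matrix (Fin m) (Fin m) ℝ) (i j : ℕ) :
    Matrix (Fin m) (Fin m) ℝ :=
  (((List.range' i (j + 1 - i)).reverse).map W).prod

/-- Euclidean norm of a vector. -/
def enorm' {a : ℕ} (v : Fin a → ℝ) : ℝ := Real.sqrt (∑ i, v i ^ 2)

/-- Largest singular value (spectral norm): supremum of `‖A v‖` over unit vectors `v`. -/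
def smax {a b : ℕ} (A : Matrix (Fin a) (Fin b) ℝ) : ℝ :=
  ⨆ v : {v : Fin b → ℝ // ∑ j, v j ^ 2 = 1}, enorm' (A.mulVec v.1)

/-- Smallest singular value: infimum of `‖A v‖` over unit vectors `v`. -/
def smin {a b : ℕ} (A : Matrix (Fin a) (Fin b) ℝ) : ℝ :=
  ⨅ v : {v : Fin b → ℝ // ∑ j, v j ^ 2 = 1}, enorm' (A.mulVec v.1)

/-- Squared Frobenius norm of a matrix. -/
def frobSq {a b : ℕ} (A : Matrix (Fin a) (Fin b) ℝ) : ℝ := ∑ i, ∑ j, A i j ^ 2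

/-- Frobenius norm of a matrix. -/
def frob {a b : ℕ} (A : Matrix (Fin a) (Fin b) ℝ) : ℝ := Real.sqrt (frobSq A)

/-- Index type for all the entries of the weight matrices
`W_1 ∈ ℝ^{m×din}`, `W_2, …, W_{L-1} ∈ ℝ^{m×m}`, `W_L ∈ ℝ^{dout×m}`. -/
def InitIdx (L m din dout : ℕ) : Type :=
  (Fin m × Fin din) ⊕ (({k : ℕ // 2 ≤ k ∧ k ≤ L - 1}) × (Fin m × Fin m)) ⊕ (Fin dout × Fin m)

/-- The family of all entries of the weight matrices. -/
def initEntry {Ω : Type*} (L m din dout : ℕ)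
    (W1 : Ω → Matrix (Fin m) (Fin din) ℝ)
    (Wmid : ℕ → Ω → Matrix (Fin m) (Fin m) ℝ)
    (WL : Ω → Matrix (Fin dout) (Fin m) ℝ) :
    InitIdx L m din dout → Ω → ℝ :=
  fun idx ω =>
    match idx with
    | Sum.inl p => W1 ω p.1 p.2
    | Sum.inr (Sum.inl p) => Wmid p.1.1 ω p.2.1 p.2.2
    | Sum.inr (Sum.inr p) => WL ω p.1 p.2
/-- Scaling factor `1/√(m^{L-1} dout)`. -/
def scal (L m dout : ℕ) : ℝ := 1 / Real.sqrt ((m : ℝ) ^ (L - 1) * dout)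

/-- Network prediction `U = (1/√(m^{L-1} dout)) W_{L:1} X`. -/
def predU {m din dout n : ℕ} (L : ℕ) (X : Matrix (Fin din) (Fin n) ℝ)
    (W1 : Matrix (Fin m) (Fin din) ℝ) (Wmid : ℕ → Matrix (Fin m) (Fin m) ℝ)
    (WL : Matrix (Fin dout) (Fin m) ℝ) : Matrix (Fin dout) (Fin n) ℝ :=
  scal L m dout • (WL * midProd Wmid 2 (L - 1) * W1 * X)

/-- The ℓ² loss `ℓ = (1/2) ‖U - Y‖_F²`. -/
def lossVal {m din dout n : ℕ} (L : ℕ) (X : Matrix (Fin din) (Fin n) ℝ)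
    (Y : Matrix (Fin dout) (Fin n) ℝ) (W1 : Matrix (Fin m) (Fin din) ℝ)
    (Wmid : ℕ → Matrix (Fin m) (Fin m) ℝ) (WL : Matrix (Fin dout) (Fin m) ℝ) : ℝ :=
  (1 / 2) * frobSq (predU L X W1 Wmid WL - Y)

/-- Gradient of the loss w.r.t. the first-layer matrix `W_1`:
`(1/√(m^{L-1} dout)) W_{L:2}ᵀ (U - Y) Xᵀ`. -/
def grad1 {m din dout n : ℕ} (L : ℕ) (X : Matrix (Fin din) (Fin n) ℝ)
    (Y : Matrix (Fin dout) (Fin n) ℝ) (W1 : Matrix (Fin m) (Fin din) ℝ)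
    (Wmid : ℕ → Matrix (Fin m) (Fin m) ℝ) (WL : Matrix (Fin dout) (Fin m) ℝ) :
    Matrix (Fin m) (Fin din) ℝ :=
  scal L m dout • ((WL * midProd Wmid 2 (L - 1))ᵀ * (predU L X W1 Wmid WL - Y) * Xᵀ)

/-- Gradient of the loss w.r.t. the middle-layer matrix `W_k` (`2 ≤ k ≤ L-1`):
`(1/√(m^{L-1} dout)) W_{L:k+1}ᵀ (U - Y) (W_{k-1:1} X)ᵀ`. -/
def gradMid {m din dout n : ℕ} (L k : ℕ) (X : Matrix (Fin din) (Fin n) ℝ)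
    (Y : Matrix (Fin dout) (Fin n) ℝ) (W1 : Matrix (Fin m) (Fin din) ℝ)
    (Wmid : ℕ → Matrix (Fin m) (Fin m) ℝ) (WL : Matrix (Fin dout) (Fin m) ℝ) :
    Matrix (Fin m) (Fin m) ℝ :=
  scal L m dout • ((WL * midProd Wmid (k + 1) (L - 1))ᵀ * (predU L X W1 Wmid WL - Y) *
    (midProd Wmid 2 (k - 1) * W1 * X)ᵀ)

/-- Gradient of the loss w.r.t. the last-layer matrix `W_L`:
`(1/√(m^{L-1} dout)) (U - Y) (W_{L-1:1} X)ᵀ`. -/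
def gradLast {m din dout n : ℕ} (L : ℕ) (X : Matrix (Fin din) (Fin n) ℝ)
    (Y : Matrix (Fin dout) (Fin n) ℝ) (W1 : Matrix (Fin m) (Fin din) ℝ)
    (Wmid : ℕ → Matrix (Fin m) (Fin m) ℝ) (WL : Matrix (Fin dout) (Fin m) ℝ) :
    Matrix (Fin dout) (Fin m) ℝ :=
  scal L m dout • ((predU L X W1 Wmid WL - Y) * (midProd Wmid 2 (L - 1) * W1 * X)ᵀ)

/-- The `k`-th largest eigenvalue (1-indexed) of a real symmetric matrix
(junk value `0` if the matrix is not symmetric). -/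
def kthEig {N : Type*} [Fintype N] [DecidableEq N] (A : Matrix N N ℝ) (k : ℕ) : ℝ :=
  if h : A.IsHermitian then
    ((Finset.univ.val.map h.eigenvalues).sort (· ≤ ·)).getD (Fintype.card N - k) 0
  else 0

lemma enorm'_nonneg {a : ℕ} (v : Fin a → ℝ) : 0 ≤ enorm' v := Real.sqrt_nonneg _

lemma enorm'_sq {a : ℕ} (v : Fin a → ℝ) : enorm' v ^ 2 = ∑ i, v i ^ 2 :=
  Real.sq_sqrt (Finset.sum_nonneg fun i _ => sq_nonneg _)

lemma sq_le_enorm' {a : ℕ} (v : Fin a → ℝ) (i : Fin a) : v i ^ 2 ≤ enorm' v ^ 2 := by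
  rw [enorm'_sq]
  exact Finset.single_le_sum (f := fun i => v i ^ 2) (fun i _ => sq_nonneg _) (Finset.mem_univ i)

lemma enorm'_eq_zero {a : ℕ} {v : Fin a → ℝ} (h : enorm' v = 0) : v = 0 := by
  funext i
  have h2 : v i ^ 2 ≤ 0 := by simpa [h] using sq_le_enorm' v i
  have := sq_nonneg (v i); have : v i ^ 2 = 0 := le_antisymm h2 this
  exact pow_eq_zero_iff (n := 2) (by norm_num) |>.mp this

lemma enorm'_smul {a : ℕ} (c : ℝ) (v : Fin a → ℝ) : enorm' (c • v) = |c| * enorm' v := by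
  unfold enorm'
  rw [← Real.sqrt_sq_eq_abs, ← Real.sqrt_mul (sq_nonneg c), Finset.mul_sum]
  congr 1; apply Finset.sum_congr rfl; intro i _
  simp [mul_pow]

lemma dot_le_enorm' {a : ℕ} (u v : Fin a → ℝ) : ∑ i, u i * v i ≤ enorm' u * enorm' v := by
  have h := Finset.sum_mul_sq_le_sq_mul_sq Finset.univ u v
  calc ∑ i, u i * v i ≤ |∑ i, u i * v i| := le_abs_self _
    _ = Real.sqrt ((∑ i, u i * v i) ^ 2) := (Real.sqrt_sq_eq_abs _).symm
    _ ≤ Real.sqrt ((∑ i, u i ^ 2) * ∑ i, v i ^ 2) := Real.sqrt_le_sqrt h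
    _ = enorm' u * enorm' v := Real.sqrt_mul (Finset.sum_nonneg fun i _ => sq_nonneg _) _

lemma frob_nonneg {a b : ℕ} (A : Matrix (Fin a) (Fin b) ℝ) : 0 ≤ frob A := Real.sqrt_nonneg _

lemma frob_sq {a b : ℕ} (A : Matrix (Fin a) (Fin b) ℝ) : frob A ^ 2 = frobSq A :=
  Real.sq_sqrt (Finset.sum_nonneg fun i _ => Finset.sum_nonneg fun j _ => sq_nonneg _)

lemma mulVec_le_frob {a b : ℕ} (A : Matrix (Fin a) (Fin b) ℝ) (v : Fin b → ℝ) :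
    enorm' (A.mulVec v) ≤ frob A * enorm' v := by
  have h1 : enorm' (A.mulVec v) ^ 2 ≤ (frob A * enorm' v) ^ 2 := by
    rw [enorm'_sq, mul_pow, frob, Real.sq_sqrt, enorm'_sq, frobSq, Finset.sum_mul]
    · apply Finset.sum_le_sum; intro i _
      calc A.mulVec v i ^ 2 = (∑ j, A i j * v j) ^ 2 := by rfl
        _ ≤ (∑ j, A i j ^ 2) * ∑ j, v j ^ 2 := Finset.sum_mul_sq_le_sq_mul_sq _ _ _
    · exact Finset.sum_nonneg fun i _ => Finset.sum_nonneg fun j _ => sq_nonneg _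
  nlinarith [enorm'_nonneg (A.mulVec v), mul_nonneg (frob_nonneg A) (enorm'_nonneg v)]

lemma smax_bdd {a b : ℕ} (A : Matrix (Fin a) (Fin b) ℝ) :
    BddAbove (Set.range fun v : {v : Fin b → ℝ // ∑ j, v j ^ 2 = 1} => enorm' (A.mulVec v.1)) := by
  refine ⟨frob A, ?_⟩
  rintro x ⟨v, rfl⟩
  have := mulVec_le_frob A v.1
  have hv : enorm' v.1 = 1 := by unfold enorm'; rw [v.2, Real.sqrt_one]
  simpa [hv] using this

lemma le_smax {a b : ℕ} (A : Matrix (Fin a) (Fin b) ℝ) {v : Fin b → ℝ}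
    (hv : ∑ j, v j ^ 2 = 1) : enorm' (A.mulVec v) ≤ smax A :=
  le_ciSup (smax_bdd A) ⟨v, hv⟩

lemma exists_unit {b : ℕ} (hb : 1 ≤ b) : ∃ v : Fin b → ℝ, ∑ j, v j ^ 2 = 1 := by
  refine ⟨fun j => if j = ⟨0, hb⟩ then 1 else 0, ?_⟩
  simp [Finset.sum_ite_eq']

lemma smax_nonneg {a b : ℕ} (hb : 1 ≤ b) (A : Matrix (Fin a) (Fin b) ℝ) : 0 ≤ smax A := by
  obtain ⟨v, hv⟩ := exists_unit hb
  exact le_trans (enorm'_nonneg _) (le_smax A hv)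

lemma mulVec_le_smax {a b : ℕ} (A : Matrix (Fin a) (Fin b) ℝ) (v : Fin b → ℝ) :
    enorm' (A.mulVec v) ≤ smax A * enorm' v := by
  by_cases hv : enorm' v = 0
  · have : v = 0 := enorm'_eq_zero hv
    subst this
    simp [hv, Matrix.mulVec_zero]
    unfold enorm'; simp
  · have hvpos : 0 < enorm' v := lt_of_le_of_ne (enorm'_nonneg v) (Ne.symm hv)
    set c := (enorm' v)⁻¹
    have hu : ∑ j, (c • v) j ^ 2 = 1 := by
      have : enorm' (c • v) = 1 := by
        rw [enorm'_smul, abs_of_nonneg (inv_nonneg.2 hvpos.le)]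
        field_simp
      have h2 := enorm'_sq (c • v)
      rw [this] at h2; simpa using h2.symm
    have := le_smax A hu
    rw [Matrix.mulVec_smul, enorm'_smul, abs_of_nonneg (inv_nonneg.2 hvpos.le)] at this
    calc enorm' (A.mulVec v) = enorm' v * ((enorm' v)⁻¹ * enorm' (A.mulVec v)) := by
          field_simp
      _ ≤ enorm' v * smax A := by
          exact mul_le_mul_of_nonneg_left this hvpos.le
      _ = smax A * enorm' v := mul_comm _ _

lemma transpose_mulVec_le_smax {a b : ℕ} (hb : 1 ≤ b) (A : Matrix (Fin a) (Fin b) ℝ)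
    (u : Fin a → ℝ) : enorm' (Aᵀ.mulVec u) ≤ smax A * enorm' u := by
  set w := Aᵀ.mulVec u with hw
  by_cases hwz : enorm' w = 0
  · rw [hwz]; exact mul_nonneg (smax_nonneg hb A) (enorm'_nonneg u)
  · have hwpos : 0 < enorm' w := lt_of_le_of_ne (enorm'_nonneg w) (Ne.symm hwz)
    have key : enorm' w ^ 2 ≤ enorm' u * enorm' (A.mulVec w) := by
      rw [enorm'_sq]
      have : ∑ j, w j ^ 2 = ∑ i, u i * (A.mulVec w) i := by
        calc ∑ j, w j ^ 2 = ∑ j, ∑ i, A i j * u i * w j := by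
              apply Finset.sum_congr rfl; intro j _
              rw [sq, ← Finset.sum_mul]
              simp [hw, Matrix.mulVec, dotProduct, Matrix.transpose_apply]
          _ = ∑ i, ∑ j, A i j * u i * w j := Finset.sum_comm
          _ = ∑ i, u i * (A.mulVec w) i := by
              apply Finset.sum_congr rfl; intro i _
              simp only [Matrix.mulVec, dotProduct, Finset.mul_sum]
              apply Finset.sum_congr rfl; intro j _; ring
      rw [this]
      exact dot_le_enorm' u _
    have h2 : enorm' w ^ 2 ≤ enorm' u * (smax A * enorm' w) :=
      key.trans (mul_le_mul_of_nonneg_left (mulVec_le_smax A w) (enorm'_nonneg u))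
    nlinarith [enorm'_nonneg u, smax_nonneg hb A]

lemma sqrt_pow_comm {x : ℝ} (hx : 0 ≤ x) (n : ℕ) :
    Real.sqrt (x ^ n) = Real.sqrt x ^ n := by
  rw [Real.sqrt_eq_rpow, Real.sqrt_eq_rpow, ← Real.rpow_natCast x n, ← Real.rpow_mul hx,
    ← Real.rpow_natCast (x ^ (1/2 : ℝ)) n, ← Real.rpow_mul hx]
  ring_nf

lemma frob_neg {a b : ℕ} (A : Matrix (Fin a) (Fin b) ℝ) : frob (-A) = frob A := by
  unfold frob frobSq
  congr 1
  apply Finset.sum_congr rfl; intro i _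
  apply Finset.sum_congr rfl; intro j _
  rw [Matrix.neg_apply, neg_sq]

lemma frob_smul' {a b : ℕ} (c : ℝ) (A : Matrix (Fin a) (Fin b) ℝ) :
    frob (c • A) = |c| * frob A := by
  unfold frob frobSq
  rw [← Real.sqrt_sq_eq_abs, ← Real.sqrt_mul (sq_nonneg c), Finset.mul_sum]
  congr 1; apply Finset.sum_congr rfl; intro i _
  rw [Finset.mul_sum]; apply Finset.sum_congr rfl; intro j _
  simp [Matrix.smul_apply, mul_pow]

lemma frob_mul_le_of_bound {a b c : ℕ} (A : Matrix (Fin a) (Fin b) ℝ)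
    (B : Matrix (Fin b) (Fin c) ℝ) (s : ℝ) (hs : 0 ≤ s)
    (h : ∀ v, enorm' (A.mulVec v) ≤ s * enorm' v) :
    frob (A * B) ≤ s * frob B := by
  have h1 : frobSq (A * B) ≤ s ^ 2 * frobSq B := by
    unfold frobSq
    rw [Finset.sum_comm]
    have e2 : s ^ 2 * ∑ k, ∑ j, B k j ^ 2 = ∑ j, s ^ 2 * ∑ k, B k j ^ 2 := by
      rw [← Finset.mul_sum, Finset.sum_comm]
    rw [e2]
    apply Finset.sum_le_sum; intro j _
    have e1 : ∑ i, (A * B) i j ^ 2 = enorm' (A.mulVec fun k => B k j) ^ 2 := by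
      rw [enorm'_sq]
      apply Finset.sum_congr rfl; intro i _
      rfl
    rw [e1]
    calc enorm' (A.mulVec fun k => B k j) ^ 2 ≤ (s * enorm' fun k => B k j) ^ 2 := by
          apply pow_le_pow_left₀ (enorm'_nonneg _) (h _)
      _ = s ^ 2 * ∑ k, B k j ^ 2 := by rw [mul_pow, enorm'_sq]
  calc frob (A * B) = Real.sqrt (frobSq (A * B)) := rfl
    _ ≤ Real.sqrt (s ^ 2 * frobSq B) := Real.sqrt_le_sqrt h1
    _ = s * frob B := by
        rw [Real.sqrt_mul (sq_nonneg s), Real.sqrt_sq hs]; rfl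

lemma frob_mul_transpose_le {a b c : ℕ} (hb : 1 ≤ b) (E : Matrix (Fin a) (Fin b) ℝ)
    (X : Matrix (Fin c) (Fin b) ℝ) : frob (E * Xᵀ) ≤ smax X * frob E := by
  have h1 : frobSq (E * Xᵀ) ≤ smax X ^ 2 * frobSq E := by
    unfold frobSq
    rw [Finset.mul_sum]
    apply Finset.sum_le_sum; intro i _
    have e1 : ∑ j, (E * Xᵀ) i j ^ 2 = enorm' (X.mulVec (E i)) ^ 2 := by
      rw [enorm'_sq]
      apply Finset.sum_congr rfl; intro j _
      congr 1
      simp [Matrix.mul_apply, Matrix.mulVec, dotProduct, Matrix.transpose_apply,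
        mul_comm]
    rw [e1]
    calc enorm' (X.mulVec (E i)) ^ 2 ≤ (smax X * enorm' (E i)) ^ 2 := by
          apply pow_le_pow_left₀ (enorm'_nonneg _) (mulVec_le_smax _ _)
      _ = smax X ^ 2 * ∑ j, E i j ^ 2 := by rw [mul_pow, enorm'_sq]
  calc frob (E * Xᵀ) = Real.sqrt (frobSq (E * Xᵀ)) := rfl
    _ ≤ Real.sqrt (smax X ^ 2 * frobSq E) := Real.sqrt_le_sqrt h1
    _ = smax X * frob E := by
        rw [Real.sqrt_mul (sq_nonneg _), Real.sqrt_sq (smax_nonneg hb X)]; rfl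

def toEuc {a b : ℕ} (A : Matrix (Fin a) (Fin b) ℝ) : EuclideanSpace ℝ (Fin a × Fin b) :=
  (WithLp.equiv 2 _).symm (fun p => A p.1 p.2)

lemma frob_eq_norm {a b : ℕ} (A : Matrix (Fin a) (Fin b) ℝ) : frob A = ‖toEuc A‖ := by
  rw [EuclideanSpace.norm_eq, frob, frobSq]
  congr 1
  rw [Fintype.sum_prod_type]
  apply Finset.sum_congr rfl; intro i _
  apply Finset.sum_congr rfl; intro j _
  rw [Real.norm_eq_abs, sq_abs]; rfl

lemma toEuc_add {a b : ℕ} (A B : Matrix (Fin a) (Fin b) ℝ) :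
    toEuc (A + B) = toEuc A + toEuc B := rfl

lemma frob_add_le {a b : ℕ} (A B : Matrix (Fin a) (Fin b) ℝ) :
    frob (A + B) ≤ frob A + frob B := by
  rw [frob_eq_norm, frob_eq_norm, frob_eq_norm, toEuc_add]
  exact norm_add_le _ _

lemma frob_telescope {a b : ℕ} (M : ℕ → Matrix (Fin a) (Fin b) ℝ) (t : ℕ) :
    frob (M (t + 1) - M 0) ≤ ∑ s ∈ Finset.range (t + 1), frob (M (s + 1) - M s) := by
  induction t with
  | zero => simp
  | succ n ih =>
    have e : M (n + 2) - M 0 = (M (n + 2) - M (n + 1)) + (M (n + 1) - M 0) := by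
      abel
    rw [Finset.sum_range_succ, e]
    have := frob_add_le (M (n + 2) - M (n + 1)) (M (n + 1) - M 0)
    linarith

lemma geom_le' {r c : ℝ} (hr0 : 0 ≤ r) (hc : 0 ≤ c) (hrc : r * c + 1 ≤ c) (n : ℕ) :
    ∑ s ∈ Finset.range n, r ^ s ≤ c := by
  induction n with
  | zero => simpa using hc
  | succ n ih =>
    rw [geom_sum_succ]
    have : r * ∑ s ∈ Finset.range n, r ^ s ≤ r * c := mul_le_mul_of_nonneg_left ih hr0
    linarith

lemma frob_triple {m' dout r p : ℕ} (hm : 1 ≤ m') (hr : 1 ≤ r)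
    (M : Matrix (Fin dout) (Fin m') ℝ) (E : Matrix (Fin dout) (Fin r) ℝ)
    (P : Matrix (Fin p) (Fin r) ℝ) (c : ℝ) (hc : 0 ≤ c) :
    frob (c • (Mᵀ * E * Pᵀ)) ≤ c * (smax M * (smax P * frob E)) := by
  rw [frob_smul', abs_of_nonneg hc, Matrix.mul_assoc]
  apply mul_le_mul_of_nonneg_left _ hc
  calc frob (Mᵀ * (E * Pᵀ)) ≤ smax M * frob (E * Pᵀ) :=
        frob_mul_le_of_bound _ _ _ (smax_nonneg hm M) (transpose_mulVec_le_smax hm M)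
    _ ≤ smax M * (smax P * frob E) :=
        mul_le_mul_of_nonneg_left (frob_mul_transpose_le hr E P) (smax_nonneg hm M)

lemma frob_pair {dout r p : ℕ} (hr : 1 ≤ r)
    (E : Matrix (Fin dout) (Fin r) ℝ) (P : Matrix (Fin p) (Fin r) ℝ) (c : ℝ) (hc : 0 ≤ c) :
    frob (c • (E * Pᵀ)) ≤ c * (smax P * frob E) := by
  rw [frob_smul', abs_of_nonneg hc]
  exact mul_le_mul_of_nonneg_left (frob_mul_transpose_le hr E P) hc

set_option maxHeartbeats 1000000 in
/-- the gradient descent iterates stay close to initialization. -/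
theorem iterates_stay_close_to_init
    (L m din dout r : ℕ) (hL : 2 ≤ L) (hm : 1 ≤ m) (hdin : 1 ≤ din) (hdout : 1 ≤ dout)
    (hmdout : dout ≤ m)
    (X : Matrix (Fin din) (Fin r) ℝ) (hrank : X.rank = r)
    (Φ : Matrix (Fin dout) (Fin din) ℝ) (Y : Matrix (Fin dout) (Fin r) ℝ) (hY : Y = Φ * X)
    (W1 : ℕ → Matrix (Fin m) (Fin din) ℝ) (Wmid : ℕ → ℕ → Matrix (Fin m) (Fin m) ℝ)
    (WL : ℕ → Matrix (Fin dout) (Fin m) ℝ)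
    (η : ℝ) (hη : 0 < η)
    -- gradient descent dynamics
    (hGD1 : ∀ s, W1 (s + 1) = W1 s - η • grad1 L X Y (W1 s) (fun k => Wmid k s) (WL s))
    (hGDmid : ∀ s, ∀ k, 2 ≤ k → k ≤ L - 1 →
      Wmid k (s + 1) = Wmid k s - η • gradMid L k X Y (W1 s) (fun k' => Wmid k' s) (WL s))
    (hGDL : ∀ s, WL (s + 1) = WL s - η • gradLast L X Y (W1 s) (fun k => Wmid k s) (WL s))
    (B : ℝ) (hB : 0 < B) (t : ℕ)
    -- step size condition: 0 < ηγ ≤ 1 for γ = L σ_min(X)²/(4 d_out)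
    (hηγpos : 0 < η * (L * smin X ^ 2 / (4 * dout)))
    (hηγ : η * (L * smin X ^ 2 / (4 * dout)) ≤ 1)
    -- (i) loss decrease up to time t
    (hloss : ∀ s ≤ t, lossVal L X Y (W1 s) (fun k => Wmid k s) (WL s) ≤
      (1 - η * (L * smin X ^ 2 / (4 * dout))) ^ s * B)
    -- (ii) spectral norm bounds up to time t
    (hleft : ∀ s ≤ t, ∀ i : ℕ, 1 ≤ i → i ≤ L - 1 →
      smax (WL s * midProd (fun k => Wmid k s) (i + 1) (L - 1)) ≤
        (5 / 4) * (m : ℝ) ^ (((L : ℝ) - i) / 2))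
    (hright : ∀ s ≤ t, ∀ i : ℕ, 2 ≤ i → i ≤ L →
      smax (midProd (fun k => Wmid k s) 2 (i - 1) * W1 s * X) ≤
        (5 / 4) * (m : ℝ) ^ (((i : ℝ) - 1) / 2) * smax X) :
    frob (W1 (t + 1) - W1 0) ≤ 24 * Real.sqrt (B * dout) * smax X / (L * smin X ^ 2) ∧
    (∀ k, 2 ≤ k → k ≤ L - 1 →
      frob (Wmid k (t + 1) - Wmid k 0) ≤
        24 * Real.sqrt (B * dout) * smax X / (L * smin X ^ 2)) ∧
    frob (WL (t + 1) - WL 0) ≤ 24 * Real.sqrt (B * dout) * smax X / (L * smin X ^ 2) := by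
  classical
  set γ : ℝ := (L : ℝ) * smin X ^ 2 / (4 * dout) with hγdef
  have hγpos : 0 < γ := by
    rcases mul_pos_iff.mp hηγpos with ⟨_, h⟩ | ⟨h, _⟩
    · exact h
    · linarith
  set a : ℝ := η * γ with hadef
  have hapos : 0 < a := hηγpos
  have ha1 : a ≤ 1 := hηγ
  have hdoutR : (0:ℝ) < dout := by exact_mod_cast hdout
  have hmR : (0:ℝ) < m := by exact_mod_cast hm
  have hT : (0:ℝ) < (L : ℝ) * smin X ^ 2 := by
    have e : (L:ℝ) * smin X ^ 2 = γ * (4 * dout) := by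
      rw [hγdef]; field_simp
    rw [e]; positivity
  -- r ≥ 1
  have hr : 1 ≤ r := by
    rcases Nat.eq_zero_or_pos r with hr0 | hr
    · exfalso
      subst hr0
      have hie : IsEmpty {v : Fin 0 → ℝ // ∑ j, v j ^ 2 = 1} :=
        ⟨fun v => by have := v.2; simp at this⟩
      have hz : smin X = 0 := Real.iInf_of_isEmpty _
      rw [hz] at hT; simp at hT
    · exact hr
  set mp : ℝ := (m : ℝ) ^ (((L : ℝ) - 1) / 2) with hmpdef
  have hmppos : 0 < mp := Real.rpow_pos_of_pos hmR _
  have hsdpos : (0:ℝ) < Real.sqrt dout := Real.sqrt_pos.mpr hdoutR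
  have hLcast : ((L - 1 : ℕ) : ℝ) = (L : ℝ) - 1 := by
    have h1 : 1 ≤ L := by omega
    push_cast [h1]; ring
  have hsqp : Real.sqrt ((m:ℝ) ^ (L - 1)) = mp := by
    rw [Real.sqrt_eq_rpow, ← Real.rpow_natCast (m:ℝ) (L-1), ← Real.rpow_mul hmR.le,
      hmpdef, hLcast]
    ring_nf
  have hscalmp : scal L m dout * mp = 1 / Real.sqrt dout := by
    rw [scal, Real.sqrt_mul (by positivity), hsqp]
    field_simp
  have hscal_nonneg : 0 ≤ scal L m dout := by
    rw [scal]; positivity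
  have hsx : 0 ≤ smax X := smax_nonneg hr X
  have h1a : (0:ℝ) ≤ 1 - a := by linarith
  have hq_le : Real.sqrt (1 - a) ≤ 1 - a / 2 := by
    nlinarith [Real.sq_sqrt h1a, Real.sqrt_nonneg (1 - a), sq_nonneg (Real.sqrt (1 - a) - 1)]
  have hr2pos : (0:ℝ) ≤ 1 - a / 2 := by linarith
  -- loss bound ⇒ frobenius bound on residual
  have hE : ∀ s, s ≤ t →
      frob (predU L X (W1 s) (fun k => Wmid k s) (WL s) - Y) ≤
        Real.sqrt (2 * B) * (1 - a / 2) ^ s := by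
    intro s hs
    have h1 := hloss s hs
    rw [lossVal] at h1
    have h2 : frobSq (predU L X (W1 s) (fun k => Wmid k s) (WL s) - Y) ≤
        2 * B * (1 - a) ^ s := by linarith
    calc frob (predU L X (W1 s) (fun k => Wmid k s) (WL s) - Y)
        ≤ Real.sqrt (2 * B * (1 - a) ^ s) := Real.sqrt_le_sqrt h2
      _ = Real.sqrt (2 * B) * Real.sqrt ((1 - a) ^ s) := Real.sqrt_mul (by positivity) _
      _ = Real.sqrt (2 * B) * Real.sqrt (1 - a) ^ s := by
          rw [sqrt_pow_comm h1a]
      _ ≤ Real.sqrt (2 * B) * (1 - a / 2) ^ s := by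
          apply mul_le_mul_of_nonneg_left _ (Real.sqrt_nonneg _)
          exact pow_le_pow_left₀ (Real.sqrt_nonneg _) hq_le s
  set D : ℝ := 25 / 16 * (1 / Real.sqrt dout) * (smax X * Real.sqrt (2 * B)) with hDdef
  have hD : 0 ≤ D := by
    rw [hDdef]
    have : (0:ℝ) ≤ Real.sqrt (2*B) := Real.sqrt_nonneg _
    positivity
  -- combination step
  have hcomb : ∀ s, s ≤ t →
      scal L m dout * (25 / 16 * mp *
        (smax X * frob (predU L X (W1 s) (fun k => Wmid k s) (WL s) - Y))) ≤
      D * (1 - a / 2) ^ s := by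
    intro s hs
    have hEs := hE s hs
    have e1 : scal L m dout * (25 / 16 * mp *
        (smax X * frob (predU L X (W1 s) (fun k => Wmid k s) (WL s) - Y))) =
        25 / 16 * (scal L m dout * mp) *
        (smax X * frob (predU L X (W1 s) (fun k => Wmid k s) (WL s) - Y)) := by ring
    rw [e1, hscalmp]
    have e2 : D * (1 - a / 2) ^ s =
        25 / 16 * (1 / Real.sqrt dout) * (smax X * (Real.sqrt (2*B) * (1 - a/2)^s)) := by
      rw [hDdef]; ring
    rw [e2]
    apply mul_le_mul_of_nonneg_left _ (by positivity)
    exact mul_le_mul_of_nonneg_left hEs hsx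
  set Cc : ℝ := η * D with hCcdef
  have hCc : 0 ≤ Cc := mul_nonneg hη.le hD
  -- final arithmetic
  have hfin : Cc * (2 / a) ≤ 24 * Real.sqrt (B * dout) * smax X / ((L:ℝ) * smin X ^ 2) := by
    have hane : a ≠ 0 := ne_of_gt hapos
    have hηne : η ≠ 0 := ne_of_gt hη
    have hγne : γ ≠ 0 := ne_of_gt hγpos
    have e1 : Cc * (2 / a) = 2 * D / γ := by
      rw [hCcdef, hadef]; field_simp
    have hTne : ((L:ℝ) * smin X ^ 2) ≠ 0 := ne_of_gt hT
    have hdne : ((dout:ℝ)) ≠ 0 := ne_of_gt hdoutR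
    have e2 : 2 * D / γ = 2 * D * (4 * dout) / ((L:ℝ) * smin X ^ 2) := by
      rw [hγdef]
      field_simp
    rw [e1, e2]
    have hs2B : Real.sqrt (2 * B) = Real.sqrt 2 * Real.sqrt B := Real.sqrt_mul (by norm_num) _
    have hsBd : Real.sqrt (B * dout) = Real.sqrt B * Real.sqrt dout := Real.sqrt_mul hB.le _
    have hdd : Real.sqrt dout * Real.sqrt dout = (dout:ℝ) := Real.mul_self_sqrt hdoutR.le
    have h2 : Real.sqrt 2 ≤ 1.5 := by
      nlinarith [Real.sq_sqrt (show (0:ℝ) ≤ 2 by norm_num), Real.sqrt_nonneg 2]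
    have hnum : 2 * D * (4 * dout) ≤ 24 * Real.sqrt (B * dout) * smax X := by
      rw [hDdef, hs2B, hsBd]
      have key2 : 2 * (25 / 16 * (1 / Real.sqrt dout) * (smax X * (Real.sqrt 2 * Real.sqrt B)))
          * (4 * dout) =
          25 / 2 * (smax X * (Real.sqrt 2 * Real.sqrt B)) * ((dout : ℝ) / Real.sqrt dout) := by
        ring
      rw [key2, Real.div_sqrt]
      nlinarith [h2, mul_nonneg (mul_nonneg hsx (Real.sqrt_nonneg B)) hsdpos.le,
        Real.sqrt_nonneg B, Real.sqrt_nonneg (2:ℝ)]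
    exact (div_le_div_iff_of_pos_right hT).mpr hnum
  -- the generic per-layer conclusion
  have key : ∀ {p q : ℕ} (V : ℕ → Matrix (Fin p) (Fin q) ℝ),
      (∀ s, s ≤ t → frob (V (s + 1) - V s) ≤ Cc * (1 - a / 2) ^ s) →
      frob (V (t + 1) - V 0) ≤ 24 * Real.sqrt (B * dout) * smax X / ((L:ℝ) * smin X ^ 2) := by
    intro p q V hV
    have hgeom : ∑ s ∈ Finset.range (t + 1), (1 - a / 2) ^ s ≤ 2 / a := by
      apply geom_le' hr2pos (by positivity)
      have : (1 - a / 2) * (2 / a) + 1 = 2 / a := by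
        field_simp; ring
      linarith
    calc frob (V (t + 1) - V 0)
        ≤ ∑ s ∈ Finset.range (t + 1), frob (V (s + 1) - V s) := frob_telescope V t
      _ ≤ ∑ s ∈ Finset.range (t + 1), Cc * (1 - a / 2) ^ s := by
          apply Finset.sum_le_sum
          intro s hs
          exact hV s (Nat.lt_succ_iff.mp (Finset.mem_range.mp hs))
      _ = Cc * ∑ s ∈ Finset.range (t + 1), (1 - a / 2) ^ s := by rw [Finset.mul_sum]
      _ ≤ Cc * (2 / a) := mul_le_mul_of_nonneg_left hgeom hCc
      _ ≤ _ := hfin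
  -- step bounds for each layer
  have hfE : ∀ s, 0 ≤ frob (predU L X (W1 s) (fun k => Wmid k s) (WL s) - Y) :=
    fun s => frob_nonneg _
  have hstep1 : ∀ s, s ≤ t → frob (W1 (s + 1) - W1 s) ≤ Cc * (1 - a / 2) ^ s := by
    intro s hs
    have hM := hleft s hs 1 le_rfl (by omega)
    push_cast at hM
    have hg : frob (grad1 L X Y (W1 s) (fun k => Wmid k s) (WL s)) ≤
        scal L m dout * (25 / 16 * mp *
          (smax X * frob (predU L X (W1 s) (fun k => Wmid k s) (WL s) - Y))) := by
      have h1 : frob (grad1 L X Y (W1 s) (fun k => Wmid k s) (WL s)) ≤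
          scal L m dout * (smax (WL s * midProd (fun k => Wmid k s) 2 (L - 1)) *
            (smax X * frob (predU L X (W1 s) (fun k => Wmid k s) (WL s) - Y))) :=
        frob_triple hm hr _ _ _ _ hscal_nonneg
      refine h1.trans (mul_le_mul_of_nonneg_left ?_ hscal_nonneg)
      have h3 : smax (WL s * midProd (fun k => Wmid k s) 2 (L - 1)) *
          (smax X * frob (predU L X (W1 s) (fun k => Wmid k s) (WL s) - Y)) ≤
          (5 / 4 * mp) * (smax X * frob (predU L X (W1 s) (fun k => Wmid k s) (WL s) - Y)) :=
        mul_le_mul_of_nonneg_right hM (mul_nonneg hsx (hfE s))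
      refine h3.trans ?_
      nlinarith [mul_nonneg (mul_nonneg hmppos.le hsx) (hfE s)]
    rw [hGD1 s, sub_sub_cancel_left, frob_neg, frob_smul', abs_of_nonneg hη.le]
    calc η * frob (grad1 L X Y (W1 s) (fun k => Wmid k s) (WL s))
        ≤ η * (D * (1 - a / 2) ^ s) :=
          mul_le_mul_of_nonneg_left (hg.trans (hcomb s hs)) hη.le
      _ = Cc * (1 - a / 2) ^ s := by rw [hCcdef]; ring
  have hstepM : ∀ k, 2 ≤ k → k ≤ L - 1 → ∀ s, s ≤ t →
      frob (Wmid k (s + 1) - Wmid k s) ≤ Cc * (1 - a / 2) ^ s := by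
    intro k hk2 hkL s hs
    have hM := hleft s hs k (by omega) hkL
    have hP := hright s hs k hk2 (by omega)
    have hg : frob (gradMid L k X Y (W1 s) (fun k' => Wmid k' s) (WL s)) ≤
        scal L m dout * (25 / 16 * mp *
          (smax X * frob (predU L X (W1 s) (fun k => Wmid k s) (WL s) - Y))) := by
      have h1 : frob (gradMid L k X Y (W1 s) (fun k' => Wmid k' s) (WL s)) ≤
          scal L m dout * (smax (WL s * midProd (fun k' => Wmid k' s) (k + 1) (L - 1)) *
            (smax (midProd (fun k' => Wmid k' s) 2 (k - 1) * W1 s * X) *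
              frob (predU L X (W1 s) (fun k => Wmid k s) (WL s) - Y))) :=
        frob_triple hm hr _ _ _ _ hscal_nonneg
      refine h1.trans (mul_le_mul_of_nonneg_left ?_ hscal_nonneg)
      have hmul : ((m:ℝ) ^ (((L:ℝ) - k) / 2)) * ((m:ℝ) ^ (((k:ℝ) - 1) / 2)) = mp := by
        rw [← Real.rpow_add hmR, hmpdef]
        congr 1
        ring
      have hnn1 : (0:ℝ) ≤ (m:ℝ) ^ (((L:ℝ) - k) / 2) := (Real.rpow_pos_of_pos hmR _).le
      have hnn2 : (0:ℝ) ≤ (m:ℝ) ^ (((k:ℝ) - 1) / 2) := (Real.rpow_pos_of_pos hmR _).le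
      calc smax (WL s * midProd (fun k' => Wmid k' s) (k + 1) (L - 1)) *
            (smax (midProd (fun k' => Wmid k' s) 2 (k - 1) * W1 s * X) *
              frob (predU L X (W1 s) (fun k => Wmid k s) (WL s) - Y))
          ≤ (5 / 4 * (m:ℝ) ^ (((L:ℝ) - k) / 2)) *
            ((5 / 4 * (m:ℝ) ^ (((k:ℝ) - 1) / 2) * smax X) *
              frob (predU L X (W1 s) (fun k => Wmid k s) (WL s) - Y)) := by
            apply mul_le_mul hM (mul_le_mul_of_nonneg_right hP (hfE s))
            · exact mul_nonneg (smax_nonneg hr _) (hfE s)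
            · positivity
        _ = 25 / 16 * ((m:ℝ) ^ (((L:ℝ) - k) / 2) * (m:ℝ) ^ (((k:ℝ) - 1) / 2)) *
              (smax X * frob (predU L X (W1 s) (fun k => Wmid k s) (WL s) - Y)) := by ring
        _ = 25 / 16 * mp *
              (smax X * frob (predU L X (W1 s) (fun k => Wmid k s) (WL s) - Y)) := by
            rw [hmul]
    rw [hGDmid s k hk2 hkL, sub_sub_cancel_left, frob_neg, frob_smul', abs_of_nonneg hη.le]
    calc η * frob (gradMid L k X Y (W1 s) (fun k' => Wmid k' s) (WL s))
        ≤ η * (D * (1 - a / 2) ^ s) :=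
          mul_le_mul_of_nonneg_left (hg.trans (hcomb s hs)) hη.le
      _ = Cc * (1 - a / 2) ^ s := by rw [hCcdef]; ring
  have hstepL : ∀ s, s ≤ t → frob (WL (s + 1) - WL s) ≤ Cc * (1 - a / 2) ^ s := by
    intro s hs
    have hP := hright s hs L hL le_rfl
    have hg : frob (gradLast L X Y (W1 s) (fun k => Wmid k s) (WL s)) ≤
        scal L m dout * (25 / 16 * mp *
          (smax X * frob (predU L X (W1 s) (fun k => Wmid k s) (WL s) - Y))) := by
      have h1 : frob (gradLast L X Y (W1 s) (fun k => Wmid k s) (WL s)) ≤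
          scal L m dout * (smax (midProd (fun k => Wmid k s) 2 (L - 1) * W1 s * X) *
            frob (predU L X (W1 s) (fun k => Wmid k s) (WL s) - Y)) :=
        frob_pair hr _ _ _ hscal_nonneg
      refine h1.trans (mul_le_mul_of_nonneg_left ?_ hscal_nonneg)
      have h3 : smax (midProd (fun k => Wmid k s) 2 (L - 1) * W1 s * X) *
          frob (predU L X (W1 s) (fun k => Wmid k s) (WL s) - Y) ≤
          (5 / 4 * mp * smax X) *
            frob (predU L X (W1 s) (fun k => Wmid k s) (WL s) - Y) :=
        mul_le_mul_of_nonneg_right hP (hfE s)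
      refine h3.trans ?_
      nlinarith [mul_nonneg (mul_nonneg hmppos.le hsx) (hfE s)]
    rw [hGDL s, sub_sub_cancel_left, frob_neg, frob_smul', abs_of_nonneg hη.le]
    calc η * frob (gradLast L X Y (W1 s) (fun k => Wmid k s) (WL s))
        ≤ η * (D * (1 - a / 2) ^ s) :=
          mul_le_mul_of_nonneg_left (hg.trans (hcomb s hs)) hη.le
      _ = Cc * (1 - a / 2) ^ s := by rw [hCcdef]; ring
  exact ⟨key W1 hstep1, fun k hk2 hkL => key (Wmid k) (hstepM k hk2 hkL), key WL hstepL⟩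
end
end

section
/- There exist universal constants C > 0 and c > 0 with the following property. Let q, m be positive integers with m > C·q, and let Z_1, …, Z_q be i.i.d. random variables each with distribution χ²_m. Then P( Z_q·Z_{q−1}·⋯·Z_1 > 1.1·m^q ) ≤ e^{−c·m/q}. -/
open MeasureTheory ProbabilityTheory
open scoped BigOperators ENNReal

open Real Set Finset

noncomputable section

/-- The chi-square distribution with `k` degrees of freedom: the law of the sum of squares of
`k` i.i.d. standard Gaussians. -/
def chiSq (k : ℕ) : Measure ℝ :=
  Measure.map (fun x : Fin k → ℝ => ∑ i, x i ^ 2) (Measure.pi fun _ => gaussianReal 0 1)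

def Dfac : ℕ → ℕ
  | 0 => 1
  | (j+1) => (2*j+1) * Dfac j

lemma gamma_half (j : ℕ) : Real.Gamma (j + 1/2) = Dfac j * Real.sqrt π / 2^j := by
  induction j with
  | zero => rw [show ((0:ℕ):ℝ) + 1/2 = 1/2 by norm_num, Real.Gamma_one_half_eq]; simp [Dfac]
  | succ n ih =>
      have h : ((n+1 : ℕ) : ℝ) + 1/2 = ((n:ℝ) + 1/2) + 1 := by push_cast; ring
      rw [h, Real.Gamma_add_one (by positivity), ih, Dfac]
      push_cast
      field_simp
      ring

lemma integral_gaussian_even_moment (j : ℕ) :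
    ∫ x : ℝ, (x^2)^j * Real.exp (-x^2/2) = Dfac j * Real.sqrt (2*π) := by
  have h1 : ∀ x : ℝ, (x^2)^j * Real.exp (-x^2/2)
      = (fun t : ℝ => (t^2)^j * Real.exp (-t^2/2)) |x| := by
    intro x; simp only [sq_abs]
  calc ∫ x : ℝ, (x^2)^j * Real.exp (-x^2/2)
      = ∫ x : ℝ, (fun t : ℝ => (t^2)^j * Real.exp (-t^2/2)) |x| := by
        exact integral_congr_ae (Filter.Eventually.of_forall h1)
    _ = 2 * ∫ x in Ioi (0:ℝ), (x^2)^j * Real.exp (-x^2/2) := integral_comp_abs (f := fun t : ℝ => (t^2)^j * Real.exp (-t^2/2))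
    _ = 2 * ∫ x in Ioi (0:ℝ), x ^ ((2*j : ℕ):ℝ) * Real.exp (-(1/2) * x ^ (2:ℝ)) := by
        congr 1
        refine setIntegral_congr_fun measurableSet_Ioi (fun x hx => ?_)
        rw [Real.rpow_natCast, Real.rpow_two, pow_mul]
        ring_nf
    _ = 2 * ((1/2:ℝ) ^ (-(((2*j:ℕ):ℝ)+1)/2) * (1/(2:ℝ)) * Real.Gamma ((((2*j:ℕ):ℝ)+1)/2)) := by
        rw [integral_rpow_mul_exp_neg_mul_rpow (by norm_num) (lt_of_lt_of_le neg_one_lt_zero (Nat.cast_nonneg _)) (by norm_num)]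
    _ = Dfac j * Real.sqrt (2*π) := by
        have e1 : ((((2*j:ℕ):ℝ))+1)/2 = (j:ℝ) + 1/2 := by push_cast; ring
        rw [e1, gamma_half]
        have e2 : (1/2:ℝ) ^ (-((j:ℝ) + 1/2)) = 2 ^ ((j:ℝ) + 1/2) := by
          rw [one_div, Real.inv_rpow (by norm_num), Real.rpow_neg (by norm_num), inv_inv]
        have : (1/2:ℝ) ^ (-(((2*j:ℕ):ℝ)+1)/2) = 2^j * Real.sqrt 2 := by
          rw [show (-(((2*j:ℕ):ℝ)+1)/2) = -((j:ℝ) + 1/2) by push_cast; ring, e2,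
            Real.rpow_add (by norm_num), Real.rpow_natCast, ← Real.sqrt_eq_rpow]
        rw [this, Real.sqrt_mul (by norm_num)]
        have hs2 : Real.sqrt 2 > 0 := by positivity
        have hsp : Real.sqrt π > 0 := Real.sqrt_pos.mpr Real.pi_pos
        field_simp

lemma lintegral_gaussian_sq_pow (j : ℕ) :
    ∫⁻ x, (ENNReal.ofReal (x^2))^j ∂(gaussianReal 0 1) = (Dfac j : ℝ≥0∞) := by
  rw [gaussianReal_of_var_ne_zero 0 one_ne_zero]
  rw [lintegral_withDensity_eq_lintegral_mul _ (measurable_gaussianPDF 0 1)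
    (by measurability : Measurable fun x : ℝ => (ENNReal.ofReal (x^2))^j)]
  have hpdf : ∀ x : ℝ, gaussianPDF 0 1 x = ENNReal.ofReal ((√(2 * π))⁻¹ * rexp (- x^2 / 2)) := by
    intro x
    simp [gaussianPDF, gaussianPDFReal]
  have heq : ∀ x : ℝ, (gaussianPDF 0 1 * fun x : ℝ => (ENNReal.ofReal (x^2))^j) x
      = ENNReal.ofReal ((√(2 * π))⁻¹ * ((x^2)^j * rexp (- x^2 / 2))) := by
    intro x
    simp only [Pi.mul_apply, hpdf, ← ENNReal.ofReal_pow (sq_nonneg x)]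
    rw [← ENNReal.ofReal_mul (by positivity)]
    ring_nf
  simp only [heq]
  have hint : Integrable (fun x : ℝ => (√(2 * π))⁻¹ * ((x^2)^j * rexp (- x^2 / 2))) := by
    apply Integrable.const_mul
    have := integrable_rpow_mul_exp_neg_mul_sq (by norm_num : (0:ℝ) < 1/2) 
      (s := ((2*j : ℕ):ℝ)) (lt_of_lt_of_le neg_one_lt_zero (Nat.cast_nonneg _))
    apply this.congr
    filter_upwards with x
    rw [Real.rpow_natCast, pow_mul]
    ring_nf
  rw [← ofReal_integral_eq_lintegral_ofReal hint
    (Filter.Eventually.of_forall fun x => by positivity)]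
  rw [integral_const_mul, integral_gaussian_even_moment]
  rw [show (√(2 * π))⁻¹ * (Dfac j * √(2*π)) = Dfac j by
    field_simp]
  exact ENNReal.ofReal_natCast _

lemma key_identity (m : ℕ) : ∀ k : ℕ,
    ∑ j ∈ Finset.range (k+1), k.choose j * Dfac j * ∏ i ∈ Finset.range (k-j), (m + 2*i)
      = ∏ i ∈ Finset.range k, (m+1+2*i) := by
  intro k
  induction k with
  | zero => simp [Dfac]
  | succ k ih =>
      rw [Finset.sum_range_succ']
      have pas : ∀ j, (k+1).choose (j+1) = k.choose j + k.choose (j+1) :=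
        fun j => Nat.choose_succ_succ k j
      have step1 : ∑ j ∈ Finset.range (k+1),
            (k+1).choose (j+1) * Dfac (j+1) * ∏ i ∈ Finset.range (k+1-(j+1)), (m + 2*i)
          = (∑ j ∈ Finset.range (k+1),
              k.choose j * Dfac (j+1) * ∏ i ∈ Finset.range (k-j), (m + 2*i))
            + ∑ j ∈ Finset.range (k+1),
              k.choose (j+1) * Dfac (j+1) * ∏ i ∈ Finset.range (k-j), (m + 2*i) := by
        rw [← Finset.sum_add_distrib]
        refine Finset.sum_congr rfl fun j hj => ?_
        rw [pas, add_mul, add_mul, Nat.succ_sub_succ]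
      rw [step1]
      -- second sum + the j=0 term equals  ∑_{j ∈ range (k+1)} g j  where g j = C(k,j) D j f(k+1-j)
      have step2 : (∑ j ∈ Finset.range (k+1),
              k.choose (j+1) * Dfac (j+1) * ∏ i ∈ Finset.range (k-j), (m + 2*i))
            + (k+1).choose 0 * Dfac 0 * ∏ i ∈ Finset.range (k+1-0), (m + 2*i)
          = ∑ j ∈ Finset.range (k+1),
              k.choose j * Dfac j * ∏ i ∈ Finset.range (k+1-j), (m + 2*i) := by
        set g : ℕ → ℕ := fun j => k.choose j * Dfac j * ∏ i ∈ Finset.range (k+1-j), (m + 2*i) with hg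
        have e1 : ∑ j ∈ Finset.range (k+2), g j = (∑ j ∈ Finset.range (k+1), g (j+1)) + g 0 :=
          Finset.sum_range_succ' _ _
        have e2 : ∑ j ∈ Finset.range (k+2), g j = ∑ j ∈ Finset.range (k+1), g j := by
          rw [Finset.sum_range_succ, hg]
          simp [Nat.choose_succ_self]
        have e3 : ∀ j, g (j+1) = k.choose (j+1) * Dfac (j+1) * ∏ i ∈ Finset.range (k-j), (m + 2*i) := by
          intro j; rw [hg]; simp [Nat.succ_sub_succ]
        calc (∑ j ∈ Finset.range (k+1),
              k.choose (j+1) * Dfac (j+1) * ∏ i ∈ Finset.range (k-j), (m + 2*i))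
            + (k+1).choose 0 * Dfac 0 * ∏ i ∈ Finset.range (k+1-0), (m + 2*i)
            = (∑ j ∈ Finset.range (k+1), g (j+1)) + g 0 := by
              simp only [e3]; congr 1; rw [hg]; simp [Dfac]
          _ = ∑ j ∈ Finset.range (k+1), g j := by rw [← e1, e2]
      rw [add_assoc, step2]
      have combine : (∑ j ∈ Finset.range (k+1),
              k.choose j * Dfac (j+1) * ∏ i ∈ Finset.range (k-j), (m + 2*i))
            + ∑ j ∈ Finset.range (k+1),
              k.choose j * Dfac j * ∏ i ∈ Finset.range (k+1-j), (m + 2*i)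
          = (m+1+2*k) * ∑ j ∈ Finset.range (k+1),
              k.choose j * Dfac j * ∏ i ∈ Finset.range (k-j), (m + 2*i) := by
        rw [← Finset.sum_add_distrib, Finset.mul_sum]
        refine Finset.sum_congr rfl fun j hj => ?_
        have hjk : j ≤ k := Nat.lt_succ_iff.mp (Finset.mem_range.mp hj)
        have h1 : k + 1 - j = (k - j) + 1 := by omega
        rw [h1, Finset.prod_range_succ, show Dfac (j+1) = (2*j+1) * Dfac j from rfl]
        have h2 : m + 2*(k-j) + (2*j+1) = m+1+2*k := by omega
        rw [← h2]
        ring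
      rw [combine, ih, Finset.prod_range_succ]
      ring

lemma lintegral_pi_moment (m : ℕ) : ∀ k : ℕ,
    ∫⁻ x : (Fin m → ℝ), (ENNReal.ofReal (∑ i, x i ^ 2))^k
        ∂(Measure.pi fun _ => gaussianReal 0 1)
      = ((∏ i ∈ Finset.range k, (m + 2*i) : ℕ) : ℝ≥0∞) := by
  induction m with
  | zero =>
      intro k
      have : ∀ x : Fin 0 → ℝ, (∑ i, x i ^ 2) = 0 := by simp
      simp only [this]
      rw [lintegral_const]
      rw [measure_univ (μ := Measure.pi fun _ : Fin 0 => gaussianReal 0 1), mul_one]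
      cases k with
      | zero => simp
      | succ k =>
          rw [Finset.prod_range_succ']
          simp
  | succ m ih =>
      intro k
      have hS : Measurable fun y : Fin m → ℝ => ∑ i, y i ^ 2 :=
        Finset.measurable_sum _ fun i _ => (measurable_pi_apply i).pow_const 2
      have hSnn : ∀ y : Fin m → ℝ, 0 ≤ ∑ i, y i ^ 2 :=
        fun y => Finset.sum_nonneg fun i _ => sq_nonneg _
      have hMP := measurePreserving_piFinSuccAbove
        (fun _ : Fin (m+1) => gaussianReal 0 1) 0
      set g : ℝ × (Fin m → ℝ) → ℝ≥0∞ :=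
        fun z => (ENNReal.ofReal (z.1 ^ 2 + ∑ i, z.2 i ^ 2))^k with hg
      have hgm : Measurable g := by
        apply Measurable.pow_const
        apply ENNReal.measurable_ofReal.comp
        exact ((measurable_fst.pow_const 2).add (hS.comp measurable_snd))
      have e1 : ∫⁻ x : (Fin (m+1) → ℝ), (ENNReal.ofReal (∑ i, x i ^ 2))^k
            ∂(Measure.pi fun _ => gaussianReal 0 1)
          = ∫⁻ z, g z ∂((gaussianReal 0 1).prod (Measure.pi fun _ : Fin m => gaussianReal 0 1)) := by
        rw [← hMP.lintegral_comp hgm]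
        congr 1
        funext x
        rw [hg]
        simp only [MeasurableEquiv.piFinSuccAbove_apply]
        congr 2
        rw [Fin.sum_univ_succAbove (fun i => x i ^ 2) 0]
        congr 1
      rw [e1, lintegral_prod _ hgm.aemeasurable]
      have e2 : ∀ a : ℝ, ∀ y : Fin m → ℝ, g (a, y)
          = ∑ j ∈ Finset.range (k+1), (k.choose j : ℝ≥0∞) *
              ((ENNReal.ofReal (a^2))^j * (ENNReal.ofReal (∑ i, y i ^ 2))^(k-j)) := by
        intro a y
        rw [hg]
        simp only
        rw [ENNReal.ofReal_add (sq_nonneg a) (hSnn y), add_pow]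
        refine Finset.sum_congr rfl fun j hj => ?_
        ring
      simp only [e2]
      have e3 : ∀ a : ℝ, ∫⁻ y, (∑ j ∈ Finset.range (k+1), (k.choose j : ℝ≥0∞) *
              ((ENNReal.ofReal (a^2))^j * (ENNReal.ofReal (∑ i, y i ^ 2))^(k-j)))
            ∂(Measure.pi fun _ : Fin m => gaussianReal 0 1)
          = ∑ j ∈ Finset.range (k+1), ((k.choose j : ℝ≥0∞) *
              ((∏ i ∈ Finset.range (k-j), (m + 2*i) : ℕ) : ℝ≥0∞)) * (ENNReal.ofReal (a^2))^j := by
        intro a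
        rw [lintegral_finset_sum]
        · refine Finset.sum_congr rfl fun j hj => ?_
          rw [lintegral_const_mul _ (Measurable.const_mul
              ((hS.ennreal_ofReal).pow_const _) _),
            lintegral_const_mul _ ((hS.ennreal_ofReal).pow_const _),
            ih (k-j)]
          ring
        · intro j hj
          exact measurable_const.mul (measurable_const.mul
            ((hS.ennreal_ofReal).pow_const _))
      simp only [e3]
      rw [lintegral_finset_sum]
      · have e4 : ∀ j, ∫⁻ a, ((k.choose j : ℝ≥0∞) *
              ((∏ i ∈ Finset.range (k-j), (m + 2*i) : ℕ) : ℝ≥0∞)) * (ENNReal.ofReal (a^2))^j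
              ∂(gaussianReal 0 1)
            = (k.choose j : ℝ≥0∞) * ((∏ i ∈ Finset.range (k-j), (m + 2*i) : ℕ) : ℝ≥0∞)
              * (Dfac j : ℝ≥0∞) := by
          intro j
          rw [lintegral_const_mul _ (((measurable_id'.pow_const 2).ennreal_ofReal).pow_const _), lintegral_gaussian_sq_pow]
        simp only [e4]
        rw [← key_identity m k]
        push_cast
        refine Finset.sum_congr rfl fun j hj => ?_
        ring
      · intro j hj
        exact measurable_const.mul (((measurable_id'.pow_const 2).ennreal_ofReal).pow_const _)

lemma measurable_sumsq (m : ℕ) : Measurable fun x : Fin m → ℝ => ∑ i, x i ^ 2 :=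
  Finset.measurable_sum _ fun i _ => (measurable_pi_apply i).pow_const 2

instance chiSq_prob (m : ℕ) : IsProbabilityMeasure (chiSq m) := by
  unfold chiSq
  exact Measure.isProbabilityMeasure_map (measurable_sumsq m).aemeasurable

lemma chiSq_neg (m : ℕ) : chiSq m {t : ℝ | t < 0} = 0 := by
  unfold chiSq
  rw [Measure.map_apply (measurable_sumsq m) (by exact measurableSet_lt measurable_id measurable_const)]
  convert measure_empty (μ := Measure.pi fun _ : Fin m => gaussianReal 0 1)
  ext x
  simp only [Set.mem_preimage, Set.mem_setOf_eq, Set.mem_empty_iff_false, iff_false, not_lt]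
  exact Finset.sum_nonneg fun i _ => sq_nonneg _

lemma chiSq_moment (m k : ℕ) :
    ∫⁻ t, (ENNReal.ofReal t)^k ∂(chiSq m)
      = ((∏ i ∈ Finset.range k, (m + 2*i) : ℕ) : ℝ≥0∞) := by
  unfold chiSq
  rw [lintegral_map (ENNReal.measurable_ofReal.pow_const k) (measurable_sumsq m)]
  exact lintegral_pi_moment m k

-- iIndepFun is stable under a.e. modification
lemma iIndepFun_congr_ae {Ω : Type} [MeasurableSpace Ω] {μ : Measure Ω} {q : ℕ}
    {f g : Fin q → Ω → ℝ} (h : iIndepFun f μ)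
    (h' : ∀ i, f i =ᵐ[μ] g i) : iIndepFun g μ := by
  rw [iIndepFun_iff_measure_inter_preimage_eq_mul] at h ⊢
  intro S sets hsets
  have hh : ∀ᵐ ω ∂μ, ∀ i ∈ S, f i ω = g i ω := by
    exact (ae_ball_iff S.countable_toSet).2 fun i _ => h' i
  have e1 : μ (⋂ i ∈ S, g i ⁻¹' sets i) = μ (⋂ i ∈ S, f i ⁻¹' sets i) := by
    apply measure_congr
    filter_upwards [hh] with ω hω
    rw [eq_iff_iff]
    show ω ∈ (⋂ i ∈ S, g i ⁻¹' sets i) ↔ ω ∈ (⋂ i ∈ S, f i ⁻¹' sets i)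
    simp only [Set.mem_iInter, Set.mem_preimage]
    constructor
    · intro h2 i hi; rw [hω i hi]; exact h2 i hi
    · intro h2 i hi; rw [← hω i hi]; exact h2 i hi
  have e2 : ∀ i ∈ S, μ (g i ⁻¹' sets i) = μ (f i ⁻¹' sets i) := by
    intro i hi
    apply measure_congr
    filter_upwards [h' i] with ω hω
    rw [eq_iff_iff]
    show ω ∈ g i ⁻¹' sets i ↔ ω ∈ f i ⁻¹' sets i
    simp only [Set.mem_preimage, hω]
  rw [e1, h S hsets]
  exact (Finset.prod_congr rfl e2).symm

-- lintegral of product of independent ℝ≥0∞-valued functions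
lemma lintegral_prod_of_indep {Ω : Type} [MeasurableSpace Ω] {μ : Measure Ω}
    [IsProbabilityMeasure μ] {q : ℕ}
    {W : Fin q → Ω → ℝ≥0∞} (hmeas : ∀ i, Measurable (W i))
    (hindep : iIndepFun W μ) (s : Finset (Fin q)) :
    ∫⁻ ω, ∏ i ∈ s, W i ω ∂μ = ∏ i ∈ s, ∫⁻ ω, W i ω ∂μ := by
  induction s using Finset.induction_on with
  | empty => simp
  | @insert a s hnotmem ih =>
      have hind : IndepFun (∏ j ∈ s, W j) (W a) μ :=
        hindep.indepFun_finsetProd_of_notMem hmeas hnotmem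
      have : ∫⁻ ω, (∏ j ∈ s, W j) ω * W a ω ∂μ
          = (∫⁻ ω, (∏ j ∈ s, W j) ω ∂μ) * ∫⁻ ω, W a ω ∂μ :=
        lintegral_mul_eq_lintegral_mul_lintegral_of_indepFun''
          (show AEMeasurable (∏ j ∈ s, W j) μ by
            rw [show (∏ j ∈ s, W j) = fun ω => ∏ j ∈ s, W j ω by funext ω; simp]
            exact (Finset.measurable_prod s (fun i _ => hmeas i)).aemeasurable)
          (hmeas a).aemeasurable hind
      simp only [Finset.prod_apply] at this
      calc ∫⁻ ω, ∏ i ∈ insert a s, W i ω ∂μ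
          = ∫⁻ ω, (∏ c ∈ s, W c ω) * W a ω ∂μ := by
            congr 1; funext ω; rw [Finset.prod_insert hnotmem]; ring
        _ = (∫⁻ ω, ∏ c ∈ s, W c ω ∂μ) * ∫⁻ ω, W a ω ∂μ := this
        _ = ∏ i ∈ insert a s, ∫⁻ ω, W i ω ∂μ := by
            rw [ih, Finset.prod_insert hnotmem]; ring

lemma log_oneone : (1/11 : ℝ) ≤ Real.log 1.1 := by
  have h := Real.log_le_sub_one_of_pos (show (0:ℝ) < 1/1.1 by norm_num)
  rw [Real.log_div one_ne_zero (by norm_num), Real.log_one] at h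
  norm_num at h ⊢
  linarith

lemma final_numeric (q m k : ℕ) (hq : 0 < q) (hm200 : (m:ℝ) > 200 * q)
    (hk1 : (m:ℝ)/(200*q) ≤ k) (hk2 : (k:ℝ) ≤ (m:ℝ)/(100*q)) (hk0 : 0 < k) :
    ((m:ℝ) + 2*k)^(k*q) ≤ Real.exp (-(1/5000 * m / q)) * (1.1 * (m:ℝ)^q)^k := by
  have hqR : (0:ℝ) < q := Nat.cast_pos.mpr hq
  have hmR : (0:ℝ) < m := by nlinarith
  have hkR : (0:ℝ) < k := Nat.cast_pos.mpr hk0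
  -- base inequality (m + 2k) ≤ m * exp (2k/m)
  have hbase : (m:ℝ) + 2*k ≤ (m:ℝ) * Real.exp (2*k/m) := by
    have h1 : (2*(k:ℝ)/m) + 1 ≤ Real.exp (2*k/m) := Real.add_one_le_exp _
    calc (m:ℝ) + 2*k = m * ((2*k/m) + 1) := by field_simp; ring
      _ ≤ m * Real.exp (2*k/m) := by
          exact mul_le_mul_of_nonneg_left h1 (le_of_lt hmR)
  have hpow : ((m:ℝ) + 2*k)^(k*q) ≤ ((m:ℝ) * Real.exp (2*k/m))^(k*q) :=
    pow_le_pow_left₀ (by positivity) hbase _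
  have hexp : ((m:ℝ) * Real.exp (2*k/m))^(k*q) = (m:ℝ)^(k*q) * Real.exp (2*k/m * (k*q)) := by
    rw [mul_pow, ← Real.exp_nat_mul]
    push_cast
    ring_nf
  -- RHS lower bound
  have h11 : Real.exp ((k:ℝ)/11) ≤ (1.1:ℝ)^k := by
    have : ((k:ℝ)/11) ≤ k * Real.log 1.1 := by
      have := log_oneone
      rw [div_eq_mul_inv]
      nlinarith
    calc Real.exp ((k:ℝ)/11) ≤ Real.exp (k * Real.log 1.1) := Real.exp_le_exp.mpr this
      _ = (1.1:ℝ)^k := by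
        rw [← Real.log_pow, Real.exp_log (by positivity)]
  -- key scalar inequality
  have hkey : 2*(k:ℝ)/m * (k*q) + 1/5000 * m / q ≤ (k:ℝ)/11 := by
    have hm'' : (k:ℝ)*(100*q) ≤ m := (le_div_iff₀ (by positivity)).mp hk2
    have hm' : (m:ℝ) ≤ k*(200*q) := (div_le_iff₀ (by positivity)).mp hk1
    have e1 : 2*(k:ℝ)/m * (k*q) ≤ (k:ℝ)/50 := by
      rw [div_mul_eq_mul_div, div_le_div_iff₀ hmR (by norm_num)]
      nlinarith [mul_le_mul_of_nonneg_left hm'' (le_of_lt hkR)]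
    have e2 : 1/5000 * (m:ℝ) / q ≤ (k:ℝ)/25 := by
      rw [div_le_div_iff₀ hqR (by norm_num)]
      nlinarith
    linarith
  calc ((m:ℝ) + 2*k)^(k*q) ≤ (m:ℝ)^(k*q) * Real.exp (2*k/m * (k*q)) := by
        rw [← hexp]; exact hpow
    _ ≤ (m:ℝ)^(k*q) * (Real.exp (-(1/5000 * m / q)) * Real.exp ((k:ℝ)/11)) := by
        apply mul_le_mul_of_nonneg_left _ (by positivity)
        rw [← Real.exp_add]
        apply Real.exp_le_exp.mpr
        linarith
    _ ≤ (m:ℝ)^(k*q) * (Real.exp (-(1/5000 * m / q)) * (1.1:ℝ)^k) := by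
        apply mul_le_mul_of_nonneg_left _ (by positivity)
        exact mul_le_mul_of_nonneg_left h11 (by positivity)
    _ = Real.exp (-(1/5000 * m / q)) * (1.1 * (m:ℝ)^q)^k := by
        rw [mul_pow, ← pow_mul]
        ring

/-- upper tail bound for a product of i.i.d. `χ²_m` random variables. -/
theorem chi_square_product_upper_tail :
    ∃ C > (0 : ℝ), ∃ c > (0 : ℝ),
      ∀ (q m : ℕ), 0 < q → 0 < m → (m : ℝ) > C * q →
      ∀ (Ω : Type) (_ : MeasurableSpace Ω) (μ : Measure Ω), IsProbabilityMeasure μ →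
      ∀ Z : Fin q → Ω → ℝ,
        iIndepFun Z μ →
        (∀ i, μ.map (Z i) = chiSq m) →
        μ {ω | (∏ i, Z i ω) > 1.1 * (m : ℝ) ^ q} ≤
          ENNReal.ofReal (Real.exp (-(c * m / q))) := by
  refine ⟨200, by norm_num, 1/5000, by norm_num, ?_⟩
  intro q m hq hm hmC Ω mΩ μ hμ Z hindep hmap
  have hqR : (0:ℝ) < q := Nat.cast_pos.mpr hq
  have hmR : (0:ℝ) < m := Nat.cast_pos.mpr hm
  -- the exponent k
  set k : ℕ := m / (200 * q) + 1 with hk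
  have hk0 : 0 < k := Nat.succ_pos _
  have h200q : 0 < 200 * q := by omega
  have hmgt : 200 * q < m := by exact_mod_cast lt_of_le_of_lt (le_of_eq rfl) (by exact_mod_cast hmC)
  have hk1 : (m:ℝ)/(200*q) ≤ k := by
    have h1 : m < k * (200 * q) := by
      calc m = 200*q * (m/(200*q)) + m % (200*q) := (Nat.div_add_mod _ _).symm
        _ < 200*q * (m/(200*q)) + 200*q := Nat.add_lt_add_left (Nat.mod_lt m h200q) _
        _ = k * (200*q) := by rw [hk]; ring
    rw [div_le_iff₀ (by positivity)]
    calc (m:ℝ) ≤ (k * (200*q) : ℕ) := by exact_mod_cast le_of_lt h1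
      _ = (k:ℝ) * (200*q) := by push_cast; ring
  have hk2 : (k:ℝ) ≤ (m:ℝ)/(100*q) := by
    have hd1 : 1 ≤ m / (200*q) := (Nat.one_le_div_iff h200q).mpr (le_of_lt hmgt)
    have hcast : ((m / (200*q) : ℕ) : ℝ) ≤ (m:ℝ)/(200*q) := by
      have := Nat.cast_div_le (α := ℝ) (m := m) (n := 200*q)
      simpa using this
    have : (k:ℝ) ≤ 2 * ((m / (200*q) : ℕ) : ℝ) := by
      rw [hk]
      push_cast
      have : (1:ℝ) ≤ ((m / (200*q) : ℕ) : ℝ) := by exact_mod_cast hd1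
      linarith
    calc (k:ℝ) ≤ 2 * ((m / (200*q) : ℕ) : ℝ) := this
      _ ≤ 2 * ((m:ℝ)/(200*q)) := by linarith
      _ = (m:ℝ)/(100*q) := by field_simp; ring
  -- measurable versions of Z
  have hprob : IsProbabilityMeasure (chiSq m) := chiSq_prob m
  have haem : ∀ i, AEMeasurable (Z i) μ := by
    intro i
    by_contra hcon
    have h0 : μ.map (Z i) = 0 := Measure.map_of_not_aemeasurable hcon
    rw [hmap i] at h0
    have := hprob.measure_univ
    rw [h0] at this
    simp at this
  set Zm : Fin q → Ω → ℝ := fun i => (haem i).mk (Z i) with hZm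
  have hZm_meas : ∀ i, Measurable (Zm i) := fun i => (haem i).measurable_mk
  have hZae : ∀ i, Z i =ᵐ[μ] Zm i := fun i => (haem i).ae_eq_mk
  have hmap' : ∀ i, μ.map (Zm i) = chiSq m := by
    intro i
    rw [← Measure.map_congr (hZae i)]
    exact hmap i
  have hindep' : iIndepFun Zm μ := iIndepFun_congr_ae hindep hZae
  -- nonnegativity a.e.
  have hnn : ∀ i, ∀ᵐ ω ∂μ, 0 ≤ Zm i ω := by
    intro i
    have hset : MeasurableSet {t : ℝ | t < 0} := measurableSet_lt measurable_id measurable_const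
    have h0 : μ (Zm i ⁻¹' {t : ℝ | t < 0}) = 0 := by
      rw [← Measure.map_apply (hZm_meas i) hset, hmap' i]
      exact chiSq_neg m
    rw [ae_iff]
    convert h0 using 2
    ext ω
    simp [not_le]
  -- the ℝ≥0∞-valued powers
  set W : Fin q → Ω → ℝ≥0∞ := fun i ω => (ENNReal.ofReal (Zm i ω))^k with hW
  have hWmeas : ∀ i, Measurable (W i) :=
    fun i => ((hZm_meas i).ennreal_ofReal).pow_const k
  have hWindep : iIndepFun W μ :=
    hindep'.comp (fun _ t => (ENNReal.ofReal t)^k)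
      (fun _ => ENNReal.measurable_ofReal.pow_const k)
  -- the threshold
  set a : ℝ≥0∞ := ENNReal.ofReal (1.1 * (m:ℝ)^q) with ha
  have hthr : (0:ℝ) < 1.1 * (m:ℝ)^q := by positivity
  have ha0 : a ≠ 0 := by
    rw [ha]
    simp only [ne_eq, ENNReal.ofReal_eq_zero, not_le]
    exact hthr
  have hak0 : a^k ≠ 0 := pow_ne_zero k ha0
  have hakt : a^k ≠ ∞ := by
    apply ENNReal.pow_ne_top
    rw [ha]; exact ENNReal.ofReal_ne_top
  -- replace Z by Zm in the event
  have hae_all : ∀ᵐ ω ∂μ, ∀ i, Z i ω = Zm i ω := ae_all_iff.mpr fun i => hZae i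
  have step0 : μ {ω | (∏ i, Z i ω) > 1.1 * (m : ℝ) ^ q}
      = μ {ω | (∏ i, Zm i ω) > 1.1 * (m : ℝ) ^ q} := by
    apply measure_congr
    filter_upwards [hae_all] with ω hω
    rw [eq_iff_iff]
    show (∏ i, Z i ω) > 1.1 * (m : ℝ) ^ q ↔ (∏ i, Zm i ω) > 1.1 * (m : ℝ) ^ q
    rw [Finset.prod_congr rfl fun i _ => hω i]
  -- tail event is contained in the moment event
  have step1 : μ {ω | (∏ i, Zm i ω) > 1.1 * (m : ℝ) ^ q}
      ≤ μ {ω | a^k ≤ ∏ i, W i ω} := by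
    apply measure_mono_ae
    filter_upwards [ae_all_iff.mpr hnn] with ω hω hmem
    show a^k ≤ ∏ i, W i ω
    have h1 : a ≤ ENNReal.ofReal (∏ i, Zm i ω) := ENNReal.ofReal_le_ofReal (le_of_lt hmem)
    have h2 : ENNReal.ofReal (∏ i, Zm i ω) = ∏ i, ENNReal.ofReal (Zm i ω) :=
      ENNReal.ofReal_prod_of_nonneg fun i _ => hω i
    calc a^k ≤ (∏ i, ENNReal.ofReal (Zm i ω))^k := by
          rw [← h2]; exact pow_le_pow_left' h1 k
      _ = ∏ i, W i ω := by rw [← Finset.prod_pow]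
  -- Markov
  have step2 : μ {ω | a^k ≤ ∏ i, W i ω} ≤ (∫⁻ ω, ∏ i, W i ω ∂μ) / a^k :=
    meas_ge_le_lintegral_div (Finset.measurable_prod _ fun i _ => hWmeas i).aemeasurable hak0 hakt
  -- compute the moment
  have hmom : ∀ i, ∫⁻ ω, W i ω ∂μ = ((∏ i ∈ Finset.range k, (m + 2*i) : ℕ) : ℝ≥0∞) := by
    intro i
    rw [hW]
    simp only
    rw [← lintegral_map (ENNReal.measurable_ofReal.pow_const k) (hZm_meas i), hmap' i]
    exact chiSq_moment m k
  have step3 : ∫⁻ ω, ∏ i, W i ω ∂μ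
      = ((∏ i ∈ Finset.range k, (m + 2*i) : ℕ) : ℝ≥0∞)^q := by
    rw [lintegral_prod_of_indep hWmeas hWindep]
    rw [Finset.prod_congr rfl fun i _ => hmom i, Finset.prod_const, Finset.card_univ,
      Fintype.card_fin]
  -- numeric bound
  have hnat : (∏ i ∈ Finset.range k, (m + 2*i)) ≤ (m + 2*k)^k := by
    calc (∏ i ∈ Finset.range k, (m + 2*i)) ≤ ∏ i ∈ Finset.range k, (m + 2*k) := by
          apply Finset.prod_le_prod'
          intro i hi
          have := Finset.mem_range.mp hi
          omega
      _ = (m + 2*k)^k := by rw [Finset.prod_const, Finset.card_range]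
  have step4 : ((∏ i ∈ Finset.range k, (m + 2*i) : ℕ) : ℝ≥0∞)^q / a^k
      ≤ ENNReal.ofReal (Real.exp (-(1/5000 * m / q))) := by
    rw [ENNReal.div_le_iff hak0 hakt]
    calc ((∏ i ∈ Finset.range k, (m + 2*i) : ℕ) : ℝ≥0∞)^q
        ≤ (((m + 2*k)^k : ℕ) : ℝ≥0∞)^q := by
          apply pow_le_pow_left'
          exact_mod_cast hnat
      _ = ENNReal.ofReal (((m:ℝ) + 2*k)^(k*q)) := by
          rw [← ENNReal.ofReal_natCast]
          rw [← ENNReal.ofReal_pow (by positivity)]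
          congr 1
          push_cast
          rw [← pow_mul]
      _ ≤ ENNReal.ofReal (Real.exp (-(1/5000 * m / q)) * (1.1 * (m:ℝ)^q)^k) := by
          apply ENNReal.ofReal_le_ofReal
          exact final_numeric q m k hq (by exact_mod_cast hmC) hk1 hk2 hk0
      _ = ENNReal.ofReal (Real.exp (-(1/5000 * m / q))) * a^k := by
          rw [ENNReal.ofReal_mul (le_of_lt (Real.exp_pos _)), ha,
            ← ENNReal.ofReal_pow (le_of_lt hthr)]
  calc μ {ω | (∏ i, Z i ω) > 1.1 * (m : ℝ) ^ q}
      = μ {ω | (∏ i, Zm i ω) > 1.1 * (m : ℝ) ^ q} := step0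
    _ ≤ μ {ω | a^k ≤ ∏ i, W i ω} := step1
    _ ≤ (∫⁻ ω, ∏ i, W i ω ∂μ) / a^k := step2
    _ = ((∏ i ∈ Finset.range k, (m + 2*i) : ℕ) : ℝ≥0∞)^q / a^k := by rw [step3]
    _ ≤ ENNReal.ofReal (Real.exp (-(1/5000 * m / q))) := step4
end
end
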